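/- Let n > p ≥ 1, let R be an n×n real symmetric positive definite matrix, let X be an n×p real matrix of full column rank, let y ∈ ℝ^n, let σ² > 0 and ν > 0. Define the multivariate Student-t density f_{ν,Σ}(z) = Γ((ν+n)/2) ν^{ν/2} / (Γ(ν/2) π^{n/2} (det Σ)^{1/2}) · (ν + zᵀΣ⁻¹z)^{-(ν+n)/2}, the generalized least squares estimator β̂ = (XᵀR⁻¹X)⁻¹XᵀR⁻¹y, and S̃ = (y − Xβ̂)ᵀR⁻¹(y − Xβ̂). Then ∫_{ℝ^p} f_{ν,σ²R}(y − Xβ) dβ = [Γ((ν+n−p)/2) ν^{ν/2} / (Γ(ν/2) π^{(n−p)/2})] · (σ²)^{-(n−p)/2} (det R)^{-1/2} (det(XᵀR⁻¹X))^{-1/2} · (ν + S̃/σ²)^{-(ν+n−p)/2}. -/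

import Mathlib

open MeasureTheory Matrix Real

namespace Stmt4Aux
open Set


variable {p : ℕ}

lemma posDef_smul {M : Matrix (Fin p) (Fin p) ℝ} (hM : M.PosDef) {c : ℝ} (hc : 0 < c) :
    (c • M).PosDef := by
  refine ⟨?_, fun x hx => ?_⟩
  · have h1 := hM.1
    unfold Matrix.IsHermitian at *
    rw [conjTranspose_smul, h1]
    simp
  · exact (hM.smul hc).2 hx

lemma quad_pos {M : Matrix (Fin p) (Fin p) ℝ} (hM : M.PosDef) {x : Fin p → ℝ} (hx : x ≠ 0) :
    0 < x ⬝ᵥ M *ᵥ x := by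
  have := hM.dotProduct_mulVec_pos hx
  simpa using this

lemma quad_nonneg {M : Matrix (Fin p) (Fin p) ℝ} (hM : M.PosSemidef) (x : Fin p → ℝ) :
    0 ≤ x ⬝ᵥ M *ᵥ x := by
  have := hM.dotProduct_mulVec_nonneg x
  simpa using this

lemma continuous_quad (M : Matrix (Fin p) (Fin p) ℝ) :
    Continuous fun β : Fin p → ℝ => β ⬝ᵥ M *ᵥ β := by
  simp only [dotProduct, Matrix.mulVec]
  fun_prop

open scoped MatrixOrder in
lemma integral_exp_neg_quad {M : Matrix (Fin p) (Fin p) ℝ} (hM : M.PosDef) :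
    ∫ β : Fin p → ℝ, Real.exp (-(β ⬝ᵥ M *ᵥ β)) = π ^ ((p : ℝ) / 2) * M.det ^ (-(1:ℝ)/2) := by
  classical
  set S := CFC.sqrt M with hSdef
  have hS2 : S * S = M := CFC.sqrt_mul_sqrt_self M hM.posSemidef.nonneg
  have hSsymm : S.IsHermitian := (CFC.sqrt_nonneg M).posSemidef.1
  have hdet : S.det * S.det = M.det := by rw [← det_mul, hS2]
  have hMdet : 0 < M.det := hM.det_pos
  have hSdet0 : S.det ≠ 0 := by
    intro h; rw [h, mul_zero] at hdet; exact hMdet.ne hdet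
  have habs : |S.det| = Real.sqrt M.det := by
    rw [← Real.sqrt_sq_eq_abs, sq, hdet]
  have hquad : ∀ β : Fin p → ℝ, β ⬝ᵥ M *ᵥ β = ∑ i, ((S *ᵥ β) i) ^ 2 := by
    intro β
    have h1 : M *ᵥ β = S *ᵥ (S *ᵥ β) := by rw [mulVec_mulVec, hS2]
    rw [h1, dotProduct_mulVec]
    have h2 : β ᵥ* S = S *ᵥ β := by
      nth_rewrite 1 [← hSsymm.eq]
      rw [vecMul_conjTranspose]
      simp
    rw [h2]
    simp [dotProduct, sq]
  have hmap := Real.map_matrix_volume_pi_eq_smul_volume_pi (M := S) hSdet0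
  have hg : Continuous fun z : Fin p → ℝ => ∏ i, Real.exp (-(z i ^ 2)) := by fun_prop
  have hgauss : ∫ x : ℝ, Real.exp (-(x ^ 2)) = Real.sqrt π := by
    have := integral_gaussian 1
    simpa using this
  calc ∫ β : Fin p → ℝ, Real.exp (-(β ⬝ᵥ M *ᵥ β))
      = ∫ β : Fin p → ℝ, ∏ i, Real.exp (-((Matrix.toLin' S β) i ^ 2)) := by
        congr 1; ext β
        rw [hquad, Matrix.toLin'_apply, ← Real.exp_sum]
        congr 1
        simp
    _ = ∫ z : Fin p → ℝ, ∏ i, Real.exp (-(z i ^ 2)) ∂(Measure.map (Matrix.toLin' S) volume) := by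
        rw [integral_map]
        · exact (Matrix.toLin' S).continuous_of_finiteDimensional.aemeasurable
        · exact hg.aestronglyMeasurable
    _ = |S.det⁻¹| * ∫ z : Fin p → ℝ, ∏ i, Real.exp (-(z i ^ 2)) := by
        rw [hmap, integral_smul_measure, ENNReal.toReal_ofReal (abs_nonneg _), smul_eq_mul]
    _ = π ^ ((p : ℝ) / 2) * M.det ^ (-(1:ℝ)/2) := by
        rw [integral_fintype_prod_volume_eq_prod (f := fun (_ : Fin p) (x : ℝ) => Real.exp (-(x ^ 2)))]
        simp only [hgauss, Finset.prod_const, Finset.card_univ, Fintype.card_fin]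
        rw [abs_inv, habs]
        rw [Real.sqrt_eq_rpow, Real.sqrt_eq_rpow, ← Real.rpow_neg_one (M.det ^ ((1:ℝ)/2)),
          ← Real.rpow_natCast (π ^ ((1:ℝ)/2)) p, ← Real.rpow_mul pi_pos.le,
          ← Real.rpow_mul hMdet.le]
        have e1 : (1:ℝ)/2 * (-1) = -(1:ℝ)/2 := by norm_num
        have e2 : (1:ℝ)/2 * (p:ℝ) = (p:ℝ)/2 := by ring
        rw [e1, e2, mul_comm]

lemma integrable_exp_neg_quad {M : Matrix (Fin p) (Fin p) ℝ} (hM : M.PosDef) :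
    Integrable (fun β : Fin p → ℝ => Real.exp (-(β ⬝ᵥ M *ᵥ β))) := by
  by_contra h
  have h0 := integral_undef h
  rw [integral_exp_neg_quad hM] at h0
  have h1 : (0:ℝ) < π ^ ((p : ℝ) / 2) * M.det ^ (-(1:ℝ)/2) := by
    have := hM.det_pos
    positivity
  exact h1.ne' h0

lemma integrableOn_rpow_exp {s r : ℝ} (hs : 0 < s) (hr : 0 < r) :
    IntegrableOn (fun t : ℝ => t ^ (s - 1) * Real.exp (-(r * t))) (Set.Ioi 0) := by
  by_contra h
  have h0 := integral_undef h
  rw [Real.integral_rpow_mul_exp_neg_mul_Ioi hs hr] at h0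
  have h1 : (0:ℝ) < (1 / r) ^ s * Real.Gamma s := by
    have := Real.Gamma_pos_of_pos hs
    positivity
  exact h1.ne' h0


lemma core {M : Matrix (Fin p) (Fin p) ℝ} (hM : M.PosDef) {a s : ℝ} (ha : 0 < a)
    (hs : (p : ℝ) / 2 < s) (b : Fin p → ℝ) :
    ∫ β : Fin p → ℝ, (a + (β - b) ⬝ᵥ M *ᵥ (β - b)) ^ (-s)
      = π ^ ((p:ℝ)/2) * Real.Gamma (s - (p:ℝ)/2) / Real.Gamma s * M.det ^ (-(1:ℝ)/2)
        * a ^ ((p:ℝ)/2 - s) := by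
  have hs0 : 0 < s := lt_of_le_of_lt (by positivity) hs
  have hs' : 0 < s - (p:ℝ)/2 := by linarith
  have hΓs : 0 < Real.Gamma s := Real.Gamma_pos_of_pos hs0
  have hMdet : 0 < M.det := hM.det_pos
  set Q : (Fin p → ℝ) → ℝ := fun β => β ⬝ᵥ M *ᵥ β with hQdef
  have hQ0 : ∀ β, 0 ≤ Q β := quad_nonneg hM.posSemidef
  have haQ : ∀ β, 0 < a + Q β := fun β => by have := hQ0 β; positivity
  set F : ℝ → (Fin p → ℝ) → ℝ := fun t β => t ^ (s - 1) * Real.exp (-((a + Q β) * t))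
    with hFdef
  -- inner Gaussian integral for fixed t > 0
  have hinner : ∀ t ∈ Ioi (0:ℝ), ∫ β : Fin p → ℝ, F t β
      = (t ^ (s - (p:ℝ)/2 - 1) * Real.exp (-(a * t)))
        * (π ^ ((p:ℝ)/2) * M.det ^ (-(1:ℝ)/2)) := by
    intro t ht
    rw [mem_Ioi] at ht
    have hFt : (fun β => F t β)
        = fun β => (t ^ (s - 1) * Real.exp (-(a * t))) * Real.exp (-(β ⬝ᵥ (t • M) *ᵥ β)) := by
      funext β
      simp only [hFdef, hQdef, smul_mulVec, dotProduct_smul, smul_eq_mul]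
      rw [mul_assoc, ← Real.exp_add]
      ring_nf
    rw [hFt, MeasureTheory.integral_const_mul, integral_exp_neg_quad (posDef_smul hM ht)]
    have h2 : ((t • M).det) ^ (-(1:ℝ)/2) = t ^ (-(p:ℝ)/2) * M.det ^ (-(1:ℝ)/2) := by
      rw [det_smul, Fintype.card_fin, Real.mul_rpow (by positivity) hMdet.le,
        ← Real.rpow_natCast t p, ← Real.rpow_mul ht.le,
        show (p:ℝ) * (-(1:ℝ)/2) = -(p:ℝ)/2 from by ring]
    have h3 : t ^ (s - 1) * t ^ (-(p:ℝ)/2) = t ^ (s - (p:ℝ)/2 - 1) := by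
      rw [← Real.rpow_add ht]; ring_nf
    rw [h2, ← h3]; ring
  -- measurability
  have hQc : Continuous Q := continuous_quad M
  have hmeasF : AEStronglyMeasurable (Function.uncurry F)
      ((volume.restrict (Ioi 0)).prod volume) := by
    apply Measurable.aestronglyMeasurable
    apply Measurable.mul
    · show Measurable fun q : ℝ × (Fin p → ℝ) => q.1 ^ (s - 1); fun_prop
    · exact (Real.continuous_exp.comp
        (((continuous_const.add (hQc.comp continuous_snd)).mul continuous_fst).neg)).measurable
  -- integrability on the product space
  have hInt : Integrable (Function.uncurry F) ((volume.restrict (Ioi 0)).prod volume) := by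
    refine (integrable_prod_iff hmeasF).mpr ⟨?_, ?_⟩
    · filter_upwards [ae_restrict_mem measurableSet_Ioi] with t ht
      rw [mem_Ioi] at ht
      have hFt : (fun β => Function.uncurry F (t, β))
          = fun β => (t ^ (s - 1) * Real.exp (-(a * t))) * Real.exp (-(β ⬝ᵥ (t • M) *ᵥ β)) := by
        funext β
        simp only [Function.uncurry, hFdef, hQdef, smul_mulVec, dotProduct_smul, smul_eq_mul]
        rw [mul_assoc, ← Real.exp_add]
        ring_nf
      rw [hFt]
      exact (integrable_exp_neg_quad (posDef_smul hM ht)).const_mul _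
    · have hknown : IntegrableOn
          (fun t : ℝ => (t ^ (s - (p:ℝ)/2 - 1) * Real.exp (-(a * t)))
            * (π ^ ((p:ℝ)/2) * M.det ^ (-(1:ℝ)/2))) (Ioi 0) := by
        exact (integrableOn_rpow_exp hs' ha).mul_const _
      apply hknown.congr
      filter_upwards [ae_restrict_mem measurableSet_Ioi] with t ht
      have habs : (fun β => ‖Function.uncurry F (t, β)‖) = fun β => F t β := by
        funext β
        rw [mem_Ioi] at ht
        have h1 : 0 ≤ F t β := by
          have : (0:ℝ) < t ^ (s - 1) := Real.rpow_pos_of_pos ht _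
          positivity
        simp only [Function.uncurry]
        exact Real.norm_of_nonneg h1
      rw [habs, hinner t ht]
  -- pointwise Gamma representation
  have hpoint : ∀ β, (a + Q β) ^ (-s)
      = (Real.Gamma s)⁻¹ * ∫ t in Ioi (0:ℝ), F t β := by
    intro β
    simp only [hFdef]
    rw [Real.integral_rpow_mul_exp_neg_mul_Ioi hs0 (haQ β), one_div,
      Real.inv_rpow (haQ β).le, ← Real.rpow_neg (haQ β).le]
    field_simp
  -- main computation
  have htrans : ∫ β : Fin p → ℝ, (a + (β - b) ⬝ᵥ M *ᵥ (β - b)) ^ (-s)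
      = ∫ β : Fin p → ℝ, (a + Q β) ^ (-s) :=
    integral_sub_right_eq_self (fun β : Fin p → ℝ => (a + Q β) ^ (-s)) b
  rw [htrans]
  calc ∫ β : Fin p → ℝ, (a + Q β) ^ (-s)
      = ∫ β : Fin p → ℝ, (Real.Gamma s)⁻¹ * ∫ t in Ioi (0:ℝ), F t β := by
        simp only [hpoint]
    _ = (Real.Gamma s)⁻¹ * ∫ β : Fin p → ℝ, ∫ t in Ioi (0:ℝ), F t β :=
        MeasureTheory.integral_const_mul _ _
    _ = (Real.Gamma s)⁻¹ * ∫ t in Ioi (0:ℝ), ∫ β : Fin p → ℝ, F t β := by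
        rw [(integral_integral_swap hInt).symm]
    _ = (Real.Gamma s)⁻¹ * ∫ t in Ioi (0:ℝ),
          (t ^ (s - (p:ℝ)/2 - 1) * Real.exp (-(a * t)))
            * (π ^ ((p:ℝ)/2) * M.det ^ (-(1:ℝ)/2)) := by
        congr 1
        exact setIntegral_congr_fun measurableSet_Ioi hinner
    _ = (Real.Gamma s)⁻¹ * (((1/a) ^ (s - (p:ℝ)/2) * Real.Gamma (s - (p:ℝ)/2))
          * (π ^ ((p:ℝ)/2) * M.det ^ (-(1:ℝ)/2))) := by
        rw [MeasureTheory.integral_mul_const,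
          Real.integral_rpow_mul_exp_neg_mul_Ioi hs' ha]
    _ = π ^ ((p:ℝ)/2) * Real.Gamma (s - (p:ℝ)/2) / Real.Gamma s * M.det ^ (-(1:ℝ)/2)
        * a ^ ((p:ℝ)/2 - s) := by
        rw [one_div, Real.inv_rpow ha.le, ← Real.rpow_neg ha.le,
          show -(s - (p:ℝ)/2) = (p:ℝ)/2 - s from by ring]
        field_simp


lemma gram_posDef {n p : ℕ} {R : Matrix (Fin n) (Fin n) ℝ} (hR : R.PosDef)
    {X : Matrix (Fin n) (Fin p) ℝ} (hX : X.rank = p) : (Xᵀ * R⁻¹ * X).PosDef := by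
  have hRi : R⁻¹.PosDef := hR.inv
  have hsym : R⁻¹ᵀ = R⁻¹ := by
    have := hRi.1
    simpa [Matrix.IsHermitian] using this
  have hinj : ∀ v : Fin p → ℝ, X *ᵥ v = 0 → v = 0 := by
    rw [← Matrix.ker_mulVecLin_eq_bot_iff]
    have h1 := LinearMap.finrank_range_add_finrank_ker X.mulVecLin
    unfold Matrix.rank at hX
    rw [hX, Module.finrank_pi] at h1
    simp only [Fintype.card_fin] at h1
    have hker : Module.finrank ℝ (LinearMap.ker X.mulVecLin) = 0 := by omega
    exact Submodule.finrank_eq_zero.mp hker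
  refine Matrix.PosDef.of_dotProduct_mulVec_pos ?_ (fun v hv => ?_)
  · show (Xᵀ * R⁻¹ * X)ᴴ = Xᵀ * R⁻¹ * X
    simp only [conjTranspose_eq_transpose_of_trivial, transpose_mul, transpose_transpose, hsym]
    rw [Matrix.mul_assoc]
  · have hXv : X *ᵥ v ≠ 0 := fun h => hv (hinj v h)
    have hpos := hRi.dotProduct_mulVec_pos hXv
    simp only [star_trivial] at hpos ⊢
    calc (0:ℝ) < (X *ᵥ v) ⬝ᵥ R⁻¹ *ᵥ (X *ᵥ v) := by simpa using hpos
      _ = (v ᵥ* Xᵀ) ⬝ᵥ R⁻¹ *ᵥ (X *ᵥ v) := by rw [vecMul_transpose]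
      _ = v ⬝ᵥ Xᵀ *ᵥ (R⁻¹ *ᵥ (X *ᵥ v)) := (dotProduct_mulVec v Xᵀ _).symm
      _ = v ⬝ᵥ (Xᵀ * R⁻¹ * X) *ᵥ v := by rw [mulVec_mulVec, mulVec_mulVec]

lemma decomp {n p : ℕ} {R : Matrix (Fin n) (Fin n) ℝ} (hR : R.PosDef)
    {X : Matrix (Fin n) (Fin p) ℝ} (hX : X.rank = p) (y : Fin n → ℝ) (β : Fin p → ℝ) :
    (y - X *ᵥ β) ⬝ᵥ R⁻¹ *ᵥ (y - X *ᵥ β)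
      = (y - X *ᵥ (((Xᵀ * R⁻¹ * X)⁻¹ * Xᵀ * R⁻¹) *ᵥ y)) ⬝ᵥ
          R⁻¹ *ᵥ (y - X *ᵥ (((Xᵀ * R⁻¹ * X)⁻¹ * Xᵀ * R⁻¹) *ᵥ y))
        + (β - ((Xᵀ * R⁻¹ * X)⁻¹ * Xᵀ * R⁻¹) *ᵥ y) ⬝ᵥ
            (Xᵀ * R⁻¹ * X) *ᵥ (β - ((Xᵀ * R⁻¹ * X)⁻¹ * Xᵀ * R⁻¹) *ᵥ y) := by
  have hRi : R⁻¹.PosDef := hR.inv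
  have hsym : R⁻¹ᵀ = R⁻¹ := by
    have := hRi.1
    simpa [Matrix.IsHermitian] using this
  set M := Xᵀ * R⁻¹ * X with hMdef
  have hMd : IsUnit M.det := isUnit_iff_ne_zero.mpr (gram_posDef hR hX).det_pos.ne'
  set bh : Fin p → ℝ := ((M⁻¹ * Xᵀ * R⁻¹) *ᵥ y) with hbh
  set e : Fin n → ℝ := y - X *ᵥ bh with he
  -- orthogonality
  have hmat : Xᵀ * R⁻¹ * X * (M⁻¹ * Xᵀ * R⁻¹) = Xᵀ * R⁻¹ := by
    rw [← hMdef, ← Matrix.mul_assoc, ← Matrix.mul_assoc, Matrix.mul_nonsing_inv _ hMd,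
      Matrix.one_mul]
  have horth : (Xᵀ * R⁻¹) *ᵥ e = 0 := by
    rw [he, mulVec_sub, hbh, mulVec_mulVec, mulVec_mulVec, hmat, sub_self]
  have cross : ∀ w : Fin p → ℝ, (X *ᵥ w) ⬝ᵥ R⁻¹ *ᵥ e = 0 := by
    intro w
    calc (X *ᵥ w) ⬝ᵥ R⁻¹ *ᵥ e = (w ᵥ* Xᵀ) ⬝ᵥ R⁻¹ *ᵥ e := by rw [vecMul_transpose]
      _ = w ⬝ᵥ Xᵀ *ᵥ (R⁻¹ *ᵥ e) := (dotProduct_mulVec w Xᵀ _).symm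
      _ = w ⬝ᵥ (Xᵀ * R⁻¹) *ᵥ e := by rw [mulVec_mulVec]
      _ = 0 := by rw [horth, dotProduct_zero]
  have cross' : ∀ w : Fin p → ℝ, e ⬝ᵥ R⁻¹ *ᵥ (X *ᵥ w) = 0 := by
    intro w
    calc e ⬝ᵥ R⁻¹ *ᵥ (X *ᵥ w) = (e ᵥ* R⁻¹) ⬝ᵥ (X *ᵥ w) := dotProduct_mulVec e R⁻¹ _
      _ = (e ᵥ* R⁻¹ᵀ) ⬝ᵥ (X *ᵥ w) := by rw [hsym]
      _ = (R⁻¹ *ᵥ e) ⬝ᵥ (X *ᵥ w) := by rw [vecMul_transpose]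
      _ = (X *ᵥ w) ⬝ᵥ R⁻¹ *ᵥ e := dotProduct_comm _ _
      _ = 0 := cross w
  have hquad : ∀ w : Fin p → ℝ, (X *ᵥ w) ⬝ᵥ R⁻¹ *ᵥ (X *ᵥ w) = w ⬝ᵥ M *ᵥ w := by
    intro w
    calc (X *ᵥ w) ⬝ᵥ R⁻¹ *ᵥ (X *ᵥ w) = (w ᵥ* Xᵀ) ⬝ᵥ R⁻¹ *ᵥ (X *ᵥ w) := by rw [vecMul_transpose]
      _ = w ⬝ᵥ Xᵀ *ᵥ (R⁻¹ *ᵥ (X *ᵥ w)) := (dotProduct_mulVec w Xᵀ _).symm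
      _ = w ⬝ᵥ M *ᵥ w := by rw [mulVec_mulVec, mulVec_mulVec, hMdef]
  have hsplit : y - X *ᵥ β = e + X *ᵥ (bh - β) := by
    rw [he, mulVec_sub]; abel
  rw [hsplit, add_dotProduct, mulVec_add, dotProduct_add, dotProduct_add,
    cross' (bh - β), cross (bh - β), hquad (bh - β)]
  have hneg : (bh - β) ⬝ᵥ M *ᵥ (bh - β) = (β - bh) ⬝ᵥ M *ᵥ (β - bh) := by
    rw [show bh - β = -(β - bh) from by abel, neg_dotProduct, mulVec_neg, dotProduct_neg, neg_neg]
  rw [hneg]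
  ring


end Stmt4Aux

open Stmt4Aux in
/-- The Student-t likelihood integrated over the regression coefficients β
(equation (5) of the paper). -/
theorem stmt4 (n p : ℕ) (hp : 1 ≤ p) (hnp : p < n)
    (R : Matrix (Fin n) (Fin n) ℝ) (hR : R.PosDef)
    (X : Matrix (Fin n) (Fin p) ℝ) (hX : X.rank = p)
    (y : Fin n → ℝ) (σ2 ν : ℝ) (hσ : 0 < σ2) (hν : 0 < ν) :
    ∫ β : Fin p → ℝ,
      Real.Gamma ((ν + n) / 2) * ν ^ (ν / 2) /
        (Real.Gamma (ν / 2) * π ^ ((n : ℝ) / 2) * (σ2 • R).det ^ ((1 : ℝ) / 2)) *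
        (ν + (y - X *ᵥ β) ⬝ᵥ (σ2 • R)⁻¹ *ᵥ (y - X *ᵥ β)) ^ (-(ν + n) / 2) =
      Real.Gamma ((ν + n - p) / 2) * ν ^ (ν / 2) /
        (Real.Gamma (ν / 2) * π ^ (((n : ℝ) - p) / 2)) *
        σ2 ^ (-((n : ℝ) - p) / 2) * R.det ^ (-(1 : ℝ) / 2) *
        (Xᵀ * R⁻¹ * X).det ^ (-(1 : ℝ) / 2) *
        (ν + (y - X *ᵥ (((Xᵀ * R⁻¹ * X)⁻¹ * Xᵀ * R⁻¹) *ᵥ y)) ⬝ᵥ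
            R⁻¹ *ᵥ (y - X *ᵥ (((Xᵀ * R⁻¹ * X)⁻¹ * Xᵀ * R⁻¹) *ᵥ y)) / σ2) ^
          (-(ν + n - p) / 2) := by
  classical
  have hM : (Xᵀ * R⁻¹ * X).PosDef := gram_posDef hR hX
  have hdecomp := decomp hR hX y
  set M : Matrix (Fin p) (Fin p) ℝ := Xᵀ * R⁻¹ * X with hMdef
  set bh : Fin p → ℝ := ((M⁻¹ * Xᵀ * R⁻¹) *ᵥ y) with hbh
  set St : ℝ := (y - X *ᵥ bh) ⬝ᵥ R⁻¹ *ᵥ (y - X *ᵥ bh) with hSt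
  have hSt0 : 0 ≤ St := quad_nonneg hR.inv.posSemidef _
  set s : ℝ := (ν + n) / 2 with hsdef
  set a : ℝ := ν + St / σ2 with hadef
  have ha : 0 < a := by rw [hadef]; positivity
  have hnp' : (p : ℝ) < n := by exact_mod_cast hnp
  have hs : (p : ℝ) / 2 < s := by rw [hsdef]; linarith
  have hM' : (σ2⁻¹ • M).PosDef := posDef_smul hM (inv_pos.mpr hσ)
  have hRdet : 0 < R.det := hR.det_pos
  have hMdet : 0 < M.det := hM.det_pos
  have hinv : (σ2 • R)⁻¹ = σ2⁻¹ • R⁻¹ := by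
    apply Matrix.inv_eq_right_inv
    rw [Matrix.smul_mul, Matrix.mul_smul, smul_smul,
      Matrix.mul_nonsing_inv R (isUnit_iff_ne_zero.mpr hRdet.ne'),
      mul_inv_cancel₀ hσ.ne', one_smul]
  set C : ℝ := Real.Gamma s * ν ^ (ν / 2) /
      (Real.Gamma (ν / 2) * π ^ ((n : ℝ) / 2) * (σ2 • R).det ^ ((1 : ℝ) / 2)) with hC
  have hintegrand : ∀ β : Fin p → ℝ,
      C * (ν + (y - X *ᵥ β) ⬝ᵥ (σ2 • R)⁻¹ *ᵥ (y - X *ᵥ β)) ^ (-(ν + (n : ℝ)) / 2)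
        = C * (a + (β - bh) ⬝ᵥ (σ2⁻¹ • M) *ᵥ (β - bh)) ^ (-s) := by
    intro β
    have hbase : ν + (y - X *ᵥ β) ⬝ᵥ (σ2 • R)⁻¹ *ᵥ (y - X *ᵥ β)
        = a + (β - bh) ⬝ᵥ (σ2⁻¹ • M) *ᵥ (β - bh) := by
      rw [hinv]
      simp only [smul_mulVec, dotProduct_smul, smul_eq_mul]
      rw [hdecomp β, hadef]
      ring
    rw [hbase, show -(ν + (n:ℝ)) / 2 = -s from by rw [hsdef]; ring]
  simp only [hintegrand]
  rw [MeasureTheory.integral_const_mul, core hM' ha hs bh, hC]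
  -- now pure real algebra
  have hGs : 0 < Real.Gamma s := Real.Gamma_pos_of_pos (by rw [hsdef]; positivity)
  have hGν : 0 < Real.Gamma (ν / 2) := Real.Gamma_pos_of_pos (by positivity)
  have hArg : s - (p:ℝ)/2 = (ν + n - p) / 2 := by rw [hsdef]; ring
  have hAexp : (p:ℝ)/2 - s = -(ν + (n:ℝ) - p) / 2 := by rw [hsdef]; ring
  have hDdet : (σ2 • R).det ^ ((1:ℝ)/2) = σ2 ^ ((n:ℝ)/2) * R.det ^ ((1:ℝ)/2) := by
    rw [det_smul, Fintype.card_fin, Real.mul_rpow (by positivity) hRdet.le,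
      ← Real.rpow_natCast σ2 n, ← Real.rpow_mul hσ.le]
    congr 2
    ring
  have hEdet : (σ2⁻¹ • M).det ^ (-(1:ℝ)/2) = σ2 ^ ((p:ℝ)/2) * M.det ^ (-(1:ℝ)/2) := by
    rw [det_smul, Fintype.card_fin, inv_pow,
      Real.mul_rpow (by positivity) hMdet.le,
      Real.inv_rpow (by positivity) (-(1:ℝ)/2),
      ← Real.rpow_natCast σ2 p, ← Real.rpow_mul hσ.le,
      ← Real.rpow_neg hσ.le]
    congr 2
    ring
  rw [hArg, hAexp, hDdet, hEdet]
  have e1 : π ^ ((n:ℝ)/2) = π ^ (((n:ℝ)-p)/2) * π ^ ((p:ℝ)/2) := by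
    rw [← Real.rpow_add pi_pos]; congr 1; ring
  have e2 : σ2 ^ ((n:ℝ)/2) = σ2 ^ (((n:ℝ)-p)/2) * σ2 ^ ((p:ℝ)/2) := by
    rw [← Real.rpow_add hσ]; congr 1; ring
  have e3 : σ2 ^ (-((n:ℝ)-p)/2) = (σ2 ^ (((n:ℝ)-p)/2))⁻¹ := by
    rw [neg_div, Real.rpow_neg hσ.le]
  have e4 : R.det ^ (-(1:ℝ)/2) = (R.det ^ ((1:ℝ)/2))⁻¹ := by
    rw [neg_div, Real.rpow_neg hRdet.le]
  rw [e1, e2, e3, e4]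
  have hπ1 : π ^ (((n:ℝ)-p)/2) ≠ 0 := (Real.rpow_pos_of_pos pi_pos _).ne'
  have hπ2 : π ^ ((p:ℝ)/2) ≠ 0 := (Real.rpow_pos_of_pos pi_pos _).ne'
  have hσ1 : σ2 ^ (((n:ℝ)-p)/2) ≠ 0 := (Real.rpow_pos_of_pos hσ _).ne'
  have hσ2' : σ2 ^ ((p:ℝ)/2) ≠ 0 := (Real.rpow_pos_of_pos hσ _).ne'
  have hrd : R.det ^ ((1:ℝ)/2) ≠ 0 := (Real.rpow_pos_of_pos hRdet _).ne'
  field_simp
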